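/- The kernel of H³ equals the span of the three vectors |u,1,0⟩+|x,0,0⟩, |a,0,0⟩+|x,1,0⟩, and |d,0,0⟩+|d′,0,1⟩ (coordinates in the order α, β, γ). -/
import Mathlib


noncomputable section

/-- Basis state `|i, b⟩` of `ℂ⁵ ⊗ ℂ²`.
Basis labels for `ℂ⁵` (α-type qudit): `u = 0`, `a = 1`, `d = 2`, `x = 3`, `d′ = 4`. -/
def ket52 (i : Fin 5) (b : Fin 2) : Fin 5 × Fin 2 → ℂ := fun p => if p = (i, b) then 1 else 0

/-- Rank-one (outer product) operator `|v⟩⟨v|`. -/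
def outer {ι : Type*} (v : ι → ℂ) : Matrix ι ι ℂ := Matrix.vecMulVec v (star v)

/-- The space `ℂ⁵ ⊗ ℂ² ⊗ ℂ²`, with factors labeled `α`, `β`, `γ`. -/
abbrev T3 : Type := Fin 5 × Fin 2 × Fin 2

/-- Basis state `|i, b, c⟩` of `ℂ⁵ ⊗ ℂ² ⊗ ℂ²`. -/
def ket3 (i : Fin 5) (b c : Fin 2) : T3 → ℂ := fun p => if p = (i, b, c) then 1 else 0

/-- Lift an operator on the `(α, β)` factors to `ℂ⁵ ⊗ ℂ² ⊗ ℂ²` (identity on `γ`). -/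
def onAB (M : Matrix (Fin 5 × Fin 2) (Fin 5 × Fin 2) ℂ) : Matrix T3 T3 ℂ :=
  fun p q => if p.2.2 = q.2.2 then M (p.1, p.2.1) (q.1, q.2.1) else 0

/-- Lift an operator on the `(α, γ)` factors to `ℂ⁵ ⊗ ℂ² ⊗ ℂ²` (identity on `β`). -/
def onAG (M : Matrix (Fin 5 × Fin 2) (Fin 5 × Fin 2) ℂ) : Matrix T3 T3 ℂ :=
  fun p q => if p.2.1 = q.2.1 then M (p.1, p.2.2) (q.1, q.2.2) else 0

/-- The operator `H³` on `ℂ⁵ ⊗ ℂ² ⊗ ℂ²`.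
With labels `u = 0`, `a = 1`, `d = 2`, `x = 3`, `d′ = 4`. -/
def H3mat : Matrix T3 T3 ℂ :=
  onAB (outer (ket52 0 0)) + onAG (outer (ket52 0 1)) +
  onAB (outer (ket52 1 1)) + onAG (outer (ket52 1 1)) +
  onAB (outer (ket52 2 1)) + onAG (outer (ket52 2 1)) +
  onAB (outer (ket52 4 1)) + onAG (outer (ket52 4 0)) +
  onAG (outer (ket52 3 1)) +
  (1 / 2 : ℂ) • onAB (outer (ket52 3 0 - ket52 0 1)) +
  (1 / 2 : ℂ) • onAB (outer (ket52 3 1 - ket52 1 0)) +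
  (1 / 2 : ℂ) • onAG (outer (ket52 2 0 - ket52 4 1))

set_option maxHeartbeats 2000000 in
theorem stmt_10 :
    LinearMap.ker (Matrix.mulVecLin H3mat) =
      Submodule.span ℂ
        ({ket3 0 1 0 + ket3 3 0 0, ket3 1 0 0 + ket3 3 1 0, ket3 2 0 0 + ket3 4 0 1} :
          Set (T3 → ℂ)) := by
  apply le_antisymm
  · intro v hv
    rw [LinearMap.mem_ker, Matrix.mulVecLin_apply] at hv
    have h000 := congrFun hv ((0:Fin 5),(0:Fin 2),(0:Fin 2))
    have h001 := congrFun hv ((0:Fin 5),(0:Fin 2),(1:Fin 2))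
    have h010 := congrFun hv ((0:Fin 5),(1:Fin 2),(0:Fin 2))
    have h011 := congrFun hv ((0:Fin 5),(1:Fin 2),(1:Fin 2))
    have h100 := congrFun hv ((1:Fin 5),(0:Fin 2),(0:Fin 2))
    have h101 := congrFun hv ((1:Fin 5),(0:Fin 2),(1:Fin 2))
    have h110 := congrFun hv ((1:Fin 5),(1:Fin 2),(0:Fin 2))
    have h111 := congrFun hv ((1:Fin 5),(1:Fin 2),(1:Fin 2))
    have h200 := congrFun hv ((2:Fin 5),(0:Fin 2),(0:Fin 2))
    have h201 := congrFun hv ((2:Fin 5),(0:Fin 2),(1:Fin 2))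
    have h210 := congrFun hv ((2:Fin 5),(1:Fin 2),(0:Fin 2))
    have h211 := congrFun hv ((2:Fin 5),(1:Fin 2),(1:Fin 2))
    have h300 := congrFun hv ((3:Fin 5),(0:Fin 2),(0:Fin 2))
    have h301 := congrFun hv ((3:Fin 5),(0:Fin 2),(1:Fin 2))
    have h310 := congrFun hv ((3:Fin 5),(1:Fin 2),(0:Fin 2))
    have h311 := congrFun hv ((3:Fin 5),(1:Fin 2),(1:Fin 2))
    have h400 := congrFun hv ((4:Fin 5),(0:Fin 2),(0:Fin 2))
    have h401 := congrFun hv ((4:Fin 5),(0:Fin 2),(1:Fin 2))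
    have h410 := congrFun hv ((4:Fin 5),(1:Fin 2),(0:Fin 2))
    have h411 := congrFun hv ((4:Fin 5),(1:Fin 2),(1:Fin 2))
    simp [Matrix.mulVec, dotProduct, Fintype.sum_prod_type, Fin.sum_univ_five,
      Fin.sum_univ_two, H3mat, onAB, onAG, outer, ket52, Matrix.vecMulVec, Prod.ext_iff,
      ← Prod.mk_zero_zero, ← Prod.mk_one_one] at h000
    simp [Matrix.mulVec, dotProduct, Fintype.sum_prod_type, Fin.sum_univ_five,
      Fin.sum_univ_two, H3mat, onAB, onAG, outer, ket52, Matrix.vecMulVec, Prod.ext_iff,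
      ← Prod.mk_zero_zero, ← Prod.mk_one_one] at h001
    simp [Matrix.mulVec, dotProduct, Fintype.sum_prod_type, Fin.sum_univ_five,
      Fin.sum_univ_two, H3mat, onAB, onAG, outer, ket52, Matrix.vecMulVec, Prod.ext_iff,
      ← Prod.mk_zero_zero, ← Prod.mk_one_one] at h010
    simp [Matrix.mulVec, dotProduct, Fintype.sum_prod_type, Fin.sum_univ_five,
      Fin.sum_univ_two, H3mat, onAB, onAG, outer, ket52, Matrix.vecMulVec, Prod.ext_iff,
      ← Prod.mk_zero_zero, ← Prod.mk_one_one] at h011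
    simp [Matrix.mulVec, dotProduct, Fintype.sum_prod_type, Fin.sum_univ_five,
      Fin.sum_univ_two, H3mat, onAB, onAG, outer, ket52, Matrix.vecMulVec, Prod.ext_iff,
      ← Prod.mk_zero_zero, ← Prod.mk_one_one] at h100
    simp [Matrix.mulVec, dotProduct, Fintype.sum_prod_type, Fin.sum_univ_five,
      Fin.sum_univ_two, H3mat, onAB, onAG, outer, ket52, Matrix.vecMulVec, Prod.ext_iff,
      ← Prod.mk_zero_zero, ← Prod.mk_one_one] at h101
    simp [Matrix.mulVec, dotProduct, Fintype.sum_prod_type, Fin.sum_univ_five,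
      Fin.sum_univ_two, H3mat, onAB, onAG, outer, ket52, Matrix.vecMulVec, Prod.ext_iff,
      ← Prod.mk_zero_zero, ← Prod.mk_one_one] at h110
    simp [Matrix.mulVec, dotProduct, Fintype.sum_prod_type, Fin.sum_univ_five,
      Fin.sum_univ_two, H3mat, onAB, onAG, outer, ket52, Matrix.vecMulVec, Prod.ext_iff,
      ← Prod.mk_zero_zero, ← Prod.mk_one_one] at h111
    simp [Matrix.mulVec, dotProduct, Fintype.sum_prod_type, Fin.sum_univ_five,
      Fin.sum_univ_two, H3mat, onAB, onAG, outer, ket52, Matrix.vecMulVec, Prod.ext_iff,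
      ← Prod.mk_zero_zero, ← Prod.mk_one_one] at h200
    simp [Matrix.mulVec, dotProduct, Fintype.sum_prod_type, Fin.sum_univ_five,
      Fin.sum_univ_two, H3mat, onAB, onAG, outer, ket52, Matrix.vecMulVec, Prod.ext_iff,
      ← Prod.mk_zero_zero, ← Prod.mk_one_one] at h201
    simp [Matrix.mulVec, dotProduct, Fintype.sum_prod_type, Fin.sum_univ_five,
      Fin.sum_univ_two, H3mat, onAB, onAG, outer, ket52, Matrix.vecMulVec, Prod.ext_iff,
      ← Prod.mk_zero_zero, ← Prod.mk_one_one] at h210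
    simp [Matrix.mulVec, dotProduct, Fintype.sum_prod_type, Fin.sum_univ_five,
      Fin.sum_univ_two, H3mat, onAB, onAG, outer, ket52, Matrix.vecMulVec, Prod.ext_iff,
      ← Prod.mk_zero_zero, ← Prod.mk_one_one] at h211
    simp [Matrix.mulVec, dotProduct, Fintype.sum_prod_type, Fin.sum_univ_five,
      Fin.sum_univ_two, H3mat, onAB, onAG, outer, ket52, Matrix.vecMulVec, Prod.ext_iff,
      ← Prod.mk_zero_zero, ← Prod.mk_one_one] at h300
    simp [Matrix.mulVec, dotProduct, Fintype.sum_prod_type, Fin.sum_univ_five,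
      Fin.sum_univ_two, H3mat, onAB, onAG, outer, ket52, Matrix.vecMulVec, Prod.ext_iff,
      ← Prod.mk_zero_zero, ← Prod.mk_one_one] at h301
    simp [Matrix.mulVec, dotProduct, Fintype.sum_prod_type, Fin.sum_univ_five,
      Fin.sum_univ_two, H3mat, onAB, onAG, outer, ket52, Matrix.vecMulVec, Prod.ext_iff,
      ← Prod.mk_zero_zero, ← Prod.mk_one_one] at h310
    simp [Matrix.mulVec, dotProduct, Fintype.sum_prod_type, Fin.sum_univ_five,
      Fin.sum_univ_two, H3mat, onAB, onAG, outer, ket52, Matrix.vecMulVec, Prod.ext_iff,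
      ← Prod.mk_zero_zero, ← Prod.mk_one_one] at h311
    simp [Matrix.mulVec, dotProduct, Fintype.sum_prod_type, Fin.sum_univ_five,
      Fin.sum_univ_two, H3mat, onAB, onAG, outer, ket52, Matrix.vecMulVec, Prod.ext_iff,
      ← Prod.mk_zero_zero, ← Prod.mk_one_one] at h400
    simp [Matrix.mulVec, dotProduct, Fintype.sum_prod_type, Fin.sum_univ_five,
      Fin.sum_univ_two, H3mat, onAB, onAG, outer, ket52, Matrix.vecMulVec, Prod.ext_iff,
      ← Prod.mk_zero_zero, ← Prod.mk_one_one] at h401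
    simp [Matrix.mulVec, dotProduct, Fintype.sum_prod_type, Fin.sum_univ_five,
      Fin.sum_univ_two, H3mat, onAB, onAG, outer, ket52, Matrix.vecMulVec, Prod.ext_iff,
      ← Prod.mk_zero_zero, ← Prod.mk_one_one] at h410
    simp [Matrix.mulVec, dotProduct, Fintype.sum_prod_type, Fin.sum_univ_five,
      Fin.sum_univ_two, H3mat, onAB, onAG, outer, ket52, Matrix.vecMulVec, Prod.ext_iff,
      ← Prod.mk_zero_zero, ← Prod.mk_one_one] at h411
    have key : v = v (0,1,0) • (ket3 0 1 0 + ket3 3 0 0) + v (1,0,0) • (ket3 1 0 0 + ket3 3 1 0)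
        + v (2,0,0) • (ket3 2 0 0 + ket3 4 0 1) := by
      funext p
      fin_cases p <;>
        simp [ket3, Prod.ext_iff, ← Prod.mk_zero_zero, ← Prod.mk_one_one]
      · linear_combination h000
      · linear_combination h001
      · linear_combination (3/4)*h011+(1/4)*h301
      · linear_combination (3/4)*h101+(1/4)*h311
      · linear_combination h110
      · linear_combination h111
      · linear_combination h201
      · linear_combination (3/4)*h210+(1/4)*h411
      · linear_combination h211
      · linear_combination 2*h300
      · linear_combination (1/4)*h011+(3/4)*h301
      · linear_combination 2*h310
      · linear_combination (1/4)*h101+(3/4)*h311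
      · linear_combination h400
      · linear_combination 2*h401
      · linear_combination h410
      · linear_combination (1/4)*h210+(3/4)*h411
    rw [key]
    refine add_mem (add_mem (Submodule.smul_mem _ _ ?_) (Submodule.smul_mem _ _ ?_))
      (Submodule.smul_mem _ _ ?_) <;>
      apply Submodule.subset_span <;> simp
  · rw [Submodule.span_le]
    rintro x hx
    simp only [Set.mem_insert_iff, Set.mem_singleton_iff] at hx
    rw [SetLike.mem_coe, LinearMap.mem_ker, Matrix.mulVecLin_apply]
    rcases hx with rfl | rfl | rfl <;>
    · funext p
      fin_cases p <;>
        simp [Matrix.mulVec, dotProduct, Fintype.sum_prod_type, Fin.sum_univ_five,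
          Fin.sum_univ_two, H3mat, onAB, onAG, outer, ket52, ket3, Matrix.vecMulVec,
          Prod.ext_iff] <;> ring
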